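/- Let p, q be co-prime positive integers and ℓ ∈ ℕ. For every f ∈ L²(0,2π) and every j ∈ ℤ, the j-th Fourier coefficient of ℛ_ℓ(p,q)f satisfies ⟨ℛ_ℓ(p,q)f, e_j⟩ = e^{−i j^ℓ 2πp/q} f̂(j). -/

import Mathlib

noncomputable section

open MeasureTheory Filter Finset Complex

/-! Basic framework: we represent elements of `L²(0,2π)` by functions `ℝ → ℂ`,
with the measure `μ2 = volume.restrict (Ioc 0 (2π))`; equality "as elements of
`L²(0,2π)`" is a.e. equality w.r.t. `μ2`, and `L²`-convergent series over `ℤ` are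
expressed by `L2HasSum` (unconditional convergence of partial sums in the
`L²(0,2π)` seminorm). -/

/-- The measure representing `L²(0,2π)`. -/
def μ2 : MeasureTheory.Measure ℝ := MeasureTheory.volume.restrict (Set.Ioc 0 (2 * Real.pi))

/-- The `2π`-periodic extension `f*`: `f*(x) = f(x - 2πm)` for `2πm ≤ x < 2π(m+1)`. -/
def pext (f : ℝ → ℂ) (x : ℝ) : ℂ := f (x - 2 * Real.pi * (⌊x / (2 * Real.pi)⌋ : ℝ))

/-- The periodic translation operator `(𝒯ₛ f)(x) = f*(x - s)`. -/
def transl (s : ℝ) (f : ℝ → ℂ) (x : ℝ) : ℂ := pext f (x - s)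

/-- The exponential basis functions `e_m(x) = e^{imx}/√(2π)`. -/
def eM (m : ℤ) (x : ℝ) : ℂ :=
  Complex.exp (Complex.I * (m : ℂ) * (x : ℂ)) / (Real.sqrt (2 * Real.pi) : ℂ)

/-- The Fourier coefficient `f̂(m) = ∫₀^{2π} f(x) e^{-imx}/√(2π) dx`. -/
def fc (f : ℝ → ℂ) (m : ℤ) : ℂ :=
  ∫ x in Set.Ioc (0 : ℝ) (2 * Real.pi),
    f x * Complex.exp (-(Complex.I * (m : ℂ) * (x : ℂ))) / (Real.sqrt (2 * Real.pi) : ℂ)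

/-- `G^{(ℓ)}_{p,q}(k) = Σ_{m=0}^{q-1} e^{-i m^ℓ 2πp/q} e_m(2πk/q)`. -/
def G (l p q k : ℕ) : ℂ :=
  ∑ m ∈ Finset.range q,
    Complex.exp (-(Complex.I * (m : ℂ) ^ l * ((2 * Real.pi * p / q : ℝ) : ℂ))) *
      eM (m : ℤ) (2 * Real.pi * k / q)

/-- The periodic revival operator `ℛ_ℓ(p,q) f = (√(2π)/q) Σ_{k=0}^{q-1} G^{(ℓ)}_{p,q}(k) 𝒯_{2πk/q} f`. -/
def Rop (l p q : ℕ) (f : ℝ → ℂ) (x : ℝ) : ℂ :=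
  ((Real.sqrt (2 * Real.pi) : ℂ) / (q : ℂ)) *
    ∑ k ∈ Finset.range q, G l p q k * transl (2 * Real.pi * k / q) f x

/-- The family `F : ℤ → (ℝ → ℂ)` sums (unconditionally, in the `L²(0,2π)` norm) to `f`. -/
def L2HasSum (F : ℤ → ℝ → ℂ) (f : ℝ → ℂ) : Prop :=
  Filter.Tendsto
    (fun s : Finset ℤ => MeasureTheory.eLpNorm (fun x => (∑ m ∈ s, F m x) - f x) 2 μ2)
    Filter.atTop (nhds 0)


lemma sqrt2pi_pos : (0:ℝ) < Real.sqrt (2 * Real.pi) := Real.sqrt_pos.mpr (by positivity)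

lemma sqrt2pi_ne_zero : ((Real.sqrt (2 * Real.pi) : ℝ) : ℂ) ≠ 0 := by
  exact_mod_cast sqrt2pi_pos.ne'

lemma term_eq_pow (q : ℕ) (hq : 0 < q) (j : ℤ) (m k : ℕ) :
    Complex.exp (Complex.I * (m:ℂ) * ((2*Real.pi*k/q : ℝ):ℂ)) *
        Complex.exp (-(Complex.I * (j:ℂ) * ((2*Real.pi*k/q : ℝ):ℂ)))
    = (Complex.exp (Complex.I * ((m:ℂ)-(j:ℂ)) * ((2*Real.pi/q : ℝ):ℂ))) ^ k := by
  rw [← Complex.exp_nat_mul, ← Complex.exp_add]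
  congr 1
  push_cast
  ring

lemma zeta_pow_q (q : ℕ) (hq : 0 < q) (j : ℤ) (m : ℕ) :
    (Complex.exp (Complex.I * ((m:ℂ)-(j:ℂ)) * ((2*Real.pi/q : ℝ):ℂ))) ^ q = 1 := by
  rw [← Complex.exp_nat_mul]
  have hqC : (q:ℂ) ≠ 0 := Nat.cast_ne_zero.mpr hq.ne'
  have : (q:ℂ) * (Complex.I * ((m:ℂ)-(j:ℂ)) * ((2*Real.pi/q : ℝ):ℂ))
      = ((m - j : ℤ):ℂ) * (2 * Real.pi * Complex.I) := by
    push_cast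
    field_simp
  rw [this, Complex.exp_int_mul_two_pi_mul_I]

lemma zeta_eq_one_iff (q : ℕ) (hq : 0 < q) (j : ℤ) (m : ℕ) :
    Complex.exp (Complex.I * ((m:ℂ)-(j:ℂ)) * ((2*Real.pi/q : ℝ):ℂ)) = 1 ↔ (q:ℤ) ∣ (m:ℤ) - j := by
  rw [Complex.exp_eq_one_iff]
  have hqC : (q:ℂ) ≠ 0 := Nat.cast_ne_zero.mpr hq.ne'
  have hpi : (Real.pi:ℂ) ≠ 0 := by exact_mod_cast Real.pi_ne_zero
  constructor
  · rintro ⟨n, hn⟩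
    refine ⟨n, ?_⟩
    have h2 : ((m:ℂ) - (j:ℂ)) = (n:ℂ) * (q:ℂ) := by
      push_cast at hn ⊢
      field_simp at hn
      have hI := Complex.I_ne_zero
      have hpi2 : (2*(Real.pi:ℂ)) * Complex.I ≠ 0 :=
        mul_ne_zero (mul_ne_zero two_ne_zero hpi) hI
      apply mul_left_cancel₀ hpi2
      linear_combination (2*(Real.pi:ℂ)*Complex.I) * hn
    have h3 : ((m:ℤ) - j : ℤ) = (n * q : ℤ) := by exact_mod_cast h2
    rw [h3]; ring
  · rintro ⟨n, hn⟩
    refine ⟨n, ?_⟩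
    have h2 : ((m:ℂ) - (j:ℂ)) = (n:ℂ) * (q:ℂ) := by
      have := congrArg (fun z : ℤ => (z:ℂ)) hn
      push_cast at this
      linear_combination this
    rw [h2]
    push_cast
    field_simp

lemma geom_kernel (q : ℕ) (hq : 0 < q) (j : ℤ) (m : ℕ) :
    ∑ k ∈ Finset.range q,
      (Complex.exp (Complex.I * ((m:ℂ)-(j:ℂ)) * ((2*Real.pi/q : ℝ):ℂ))) ^ k
    = if (q:ℤ) ∣ (m:ℤ) - j then (q:ℂ) else 0 := by
  by_cases h : (q:ℤ) ∣ (m:ℤ) - j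
  · rw [if_pos h]
    have h1 : Complex.exp (Complex.I * ((m:ℂ)-(j:ℂ)) * ((2*Real.pi/q : ℝ):ℂ)) = 1 :=
      (zeta_eq_one_iff q hq j m).mpr h
    push_cast at h1 ⊢
    simp [h1]
  · rw [if_neg h]
    have h1 : Complex.exp (Complex.I * ((m:ℂ)-(j:ℂ)) * ((2*Real.pi/q : ℝ):ℂ)) ≠ 1 :=
      fun hc => h ((zeta_eq_one_iff q hq j m).mp hc)
    rw [geom_sum_eq h1, zeta_pow_q q hq j m]
    simp

lemma exp_pow_congr (l p q : ℕ) (hq : 0 < q) (j : ℤ) (m : ℕ) (h : (q:ℤ) ∣ (m:ℤ) - j) :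
    Complex.exp (-(Complex.I * (m:ℂ)^l * ((2*Real.pi*p/q : ℝ):ℂ)))
      = Complex.exp (-(Complex.I * (j:ℂ)^l * ((2*Real.pi*p/q : ℝ):ℂ))) := by
  obtain ⟨t, ht⟩ := h.trans (sub_dvd_pow_sub_pow (m:ℤ) j l)
  have hcast : ((m:ℂ))^l = (j:ℂ)^l + (q:ℂ)*(t:ℂ) := by
    have : ((m:ℤ))^l = j^l + q*t := by omega
    exact_mod_cast this
  have hqC : (q:ℂ) ≠ 0 := Nat.cast_ne_zero.mpr hq.ne'
  rw [hcast]
  have : -(Complex.I * ((j:ℂ)^l + (q:ℂ)*(t:ℂ)) * ((2*Real.pi*p/q : ℝ):ℂ))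
      = -(Complex.I * (j:ℂ)^l * ((2*Real.pi*p/q : ℝ):ℂ)) + ((-(t*p) : ℤ):ℂ) * (2*Real.pi*Complex.I) := by
    push_cast
    field_simp
    ring
  rw [this, Complex.exp_add, Complex.exp_int_mul_two_pi_mul_I, mul_one]

lemma alg (l p q : ℕ) (hq : 0 < q) (j : ℤ) :
    ∑ k ∈ Finset.range q,
      G l p q k * Complex.exp (-(Complex.I * (j:ℂ) * ((2 * Real.pi * k / q : ℝ) : ℂ)))
      = ((q:ℂ) / ((Real.sqrt (2*Real.pi) : ℝ):ℂ)) *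
        Complex.exp (-(Complex.I * (j:ℂ)^l * ((2*Real.pi*p/q : ℝ):ℂ))) := by
  set c : ℂ := ((Real.sqrt (2*Real.pi) : ℝ):ℂ) with hc
  have step1 : ∀ k ∈ Finset.range q,
      G l p q k * Complex.exp (-(Complex.I * (j:ℂ) * ((2 * Real.pi * k / q : ℝ) : ℂ)))
      = ∑ m ∈ Finset.range q,
          (Complex.exp (-(Complex.I * (m : ℂ) ^ l * ((2 * Real.pi * p / q : ℝ) : ℂ))) / c) *
            (Complex.exp (Complex.I * ((m:ℂ)-(j:ℂ)) * ((2*Real.pi/q : ℝ):ℂ))) ^ k := by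
    intro k _
    rw [G, Finset.sum_mul]
    refine Finset.sum_congr rfl fun m _ => ?_
    rw [eM, ← term_eq_pow q hq j m k]
    push_cast
    ring
  rw [Finset.sum_congr rfl step1, Finset.sum_comm]
  have step2 : ∀ m ∈ Finset.range q,
      (∑ k ∈ Finset.range q,
        (Complex.exp (-(Complex.I * (m : ℂ) ^ l * ((2 * Real.pi * p / q : ℝ) : ℂ))) / c) *
          (Complex.exp (Complex.I * ((m:ℂ)-(j:ℂ)) * ((2*Real.pi/q : ℝ):ℂ))) ^ k)
      = (Complex.exp (-(Complex.I * (m : ℂ) ^ l * ((2 * Real.pi * p / q : ℝ) : ℂ))) / c) *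
          (if (q:ℤ) ∣ (m:ℤ) - j then (q:ℂ) else 0) := by
    intro m _
    rw [← Finset.mul_sum, geom_kernel q hq j m]
  rw [Finset.sum_congr rfl step2]
  set m₀ : ℕ := (j % (q:ℤ)).toNat with hm₀
  have hq' : (q:ℤ) ≠ 0 := by exact_mod_cast hq.ne'
  have hm0q : (m₀:ℤ) = j % q := Int.toNat_of_nonneg (Int.emod_nonneg j hq')
  have hm0lt : m₀ < q := by
    have := Int.emod_lt_of_pos j (by exact_mod_cast hq : (0:ℤ) < q)
    omega
  have hdvd0 : (q:ℤ) ∣ (m₀:ℤ) - j := ⟨-(j / q), by rw [hm0q, Int.emod_def]; ring⟩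
  rw [Finset.sum_eq_single_of_mem m₀ (Finset.mem_range.mpr hm0lt)]
  · rw [if_pos hdvd0, exp_pow_congr l p q hq j m₀ hdvd0]
    ring
  · intro m hm hne
    rw [if_neg, mul_zero]
    intro h
    have h1 : (m:ℤ) % q = j % q := Int.modEq_iff_dvd.mpr (dvd_sub_comm.mp h)
    have h2 : (m:ℤ) % q = (m:ℤ) := Int.emod_eq_of_lt (by positivity) (by exact_mod_cast Finset.mem_range.mp hm)
    have h3 : (m:ℤ) = (m₀:ℤ) := by rw [← h2, h1, ← hm0q]
    exact hne (by exact_mod_cast h3)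

lemma two_pi_pos : (0:ℝ) < 2 * Real.pi := by positivity

lemma pext_eq_of_mem (g : ℝ → ℂ) {y : ℝ} (h0 : 0 ≤ y) (h1 : y < 2*Real.pi) :
    pext g y = g y := by
  unfold pext
  have : ⌊y / (2*Real.pi)⌋ = 0 := Int.floor_eq_zero_iff.mpr
    ⟨div_nonneg h0 two_pi_pos.le, (div_lt_one two_pi_pos).mpr h1⟩
  simp [this]

lemma pext_eq_of_neg (g : ℝ → ℂ) {y : ℝ} (h0 : -(2*Real.pi) ≤ y) (h1 : y < 0) :
    pext g y = g (y + 2*Real.pi) := by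
  unfold pext
  have hfl : ⌊y / (2*Real.pi)⌋ = -1 := by
    rw [Int.floor_eq_iff]
    constructor
    · push_cast
      rw [neg_le, ← neg_div]
      exact (div_le_one two_pi_pos).mpr (by linarith)
    · push_cast
      rw [div_lt_iff₀ two_pi_pos]
      linarith
  rw [hfl]
  congr 1
  push_cast
  ring

lemma norm_E (j : ℤ) (x : ℝ) : ‖Complex.exp (-(Complex.I * (j:ℂ) * (x:ℂ)))‖ = 1 := by
  have h : -(Complex.I * (j:ℂ) * (x:ℂ)) = ((-(j*x) : ℝ):ℂ) * Complex.I := by push_cast; ring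
  rw [h, Complex.norm_exp_ofReal_mul_I]

lemma conj_eM (j : ℤ) (x : ℝ) :
    (starRingEnd ℂ) (eM j x)
      = Complex.exp (-(Complex.I * (j:ℂ) * (x:ℂ))) / ((Real.sqrt (2*Real.pi):ℝ):ℂ) := by
  rw [eM, map_div₀, ← Complex.exp_conj, Complex.conj_ofReal]
  congr 1
  simp [map_mul, Complex.conj_I, Complex.conj_ofReal]

lemma exp_sub_split (j : ℤ) (x s : ℝ) :
    Complex.exp (-(Complex.I * (j:ℂ) * ((x - s : ℝ):ℂ))) * Complex.exp (-(Complex.I * (j:ℂ) * (s:ℂ)))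
      = Complex.exp (-(Complex.I * (j:ℂ) * (x:ℂ))) := by
  rw [← Complex.exp_add]
  congr 1
  push_cast
  ring

lemma exp_shift (j : ℤ) (s : ℝ) :
    Complex.exp (-(Complex.I * (j:ℂ) * ((s - 2*Real.pi : ℝ):ℂ)))
      = Complex.exp (-(Complex.I * (j:ℂ) * (s:ℂ))) := by
  have : -(Complex.I * (j:ℂ) * ((s - 2*Real.pi : ℝ):ℂ))
      = -(Complex.I * (j:ℂ) * (s:ℂ)) + (j:ℂ) * (2*Real.pi*Complex.I) := by
    push_cast; ring
  rw [this, Complex.exp_add, Complex.exp_int_mul_two_pi_mul_I, mul_one]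

lemma transl_key (g : ℝ → ℂ) (j : ℤ)
    (hH : IntervalIntegrable (fun y => g y * Complex.exp (-(Complex.I * (j:ℂ) * (y:ℂ))))
      MeasureTheory.volume 0 (2*Real.pi))
    {s : ℝ} (hs0 : 0 ≤ s) (hs : s < 2*Real.pi) :
    IntervalIntegrable (fun x => transl s g x * Complex.exp (-(Complex.I * (j:ℂ) * (x:ℂ))))
      MeasureTheory.volume 0 (2*Real.pi) ∧
    (∫ x in (0:ℝ)..(2*Real.pi), transl s g x * Complex.exp (-(Complex.I * (j:ℂ) * (x:ℂ))))
      = Complex.exp (-(Complex.I * (j:ℂ) * (s:ℂ))) *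
        ∫ x in (0:ℝ)..(2*Real.pi), g x * Complex.exp (-(Complex.I * (j:ℂ) * (x:ℂ))) := by
  set H : ℝ → ℂ := fun y => g y * Complex.exp (-(Complex.I * (j:ℂ) * (y:ℂ))) with hHdef
  set e : ℂ := Complex.exp (-(Complex.I * (j:ℂ) * (s:ℂ))) with hedef
  have hs2 : s ≤ 2*Real.pi := hs.le
  -- pointwise identities a.e.
  have hae1 : ∀ᵐ x ∂MeasureTheory.volume, x ∈ Set.uIoc s (2*Real.pi) →
      transl s g x * Complex.exp (-(Complex.I * (j:ℂ) * (x:ℂ))) = H (x - s) * e := by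
    have hne : ∀ᵐ (x:ℝ) ∂MeasureTheory.volume, x ≠ 2*Real.pi := by
      rw [MeasureTheory.ae_iff]
      simp only [not_not, Set.setOf_eq_eq_singleton]
      exact Real.volume_singleton
    filter_upwards [hne] with x hxne hx
    rw [Set.uIoc_of_le hs2] at hx
    have hx2 : x < 2*Real.pi := lt_of_le_of_ne hx.2 hxne
    rw [transl, pext_eq_of_mem g (by linarith [hx.1] : (0:ℝ) ≤ x - s) (by linarith : x - s < 2*Real.pi)]
    show g (x - s) * Complex.exp (-(Complex.I * (j:ℂ) * (x:ℂ))) = H (x - s) * e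
    rw [hHdef, hedef]
    simp only []
    rw [← exp_sub_split j x s]
    ring
  have hae2 : ∀ᵐ x ∂MeasureTheory.volume, x ∈ Set.uIoc 0 s →
      transl s g x * Complex.exp (-(Complex.I * (j:ℂ) * (x:ℂ)))
        = H (x - (s - 2*Real.pi)) * e := by
    have hne : ∀ᵐ (x:ℝ) ∂MeasureTheory.volume, x ≠ s := by
      rw [MeasureTheory.ae_iff]
      simp only [not_not, Set.setOf_eq_eq_singleton]
      exact Real.volume_singleton
    filter_upwards [hne] with x hxne hx
    rw [Set.uIoc_of_le hs0] at hx
    have hxs : x < s := lt_of_le_of_ne hx.2 hxne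
    rw [transl, pext_eq_of_neg g (by linarith [hx.1] : -(2*Real.pi) ≤ x - s) (by linarith : x - s < 0)]
    have harg : x - s + 2*Real.pi = x - (s - 2*Real.pi) := by ring
    rw [harg]
    show g (x - (s - 2*Real.pi)) * Complex.exp (-(Complex.I * (j:ℂ) * (x:ℂ)))
        = H (x - (s - 2*Real.pi)) * e
    rw [hHdef, hedef]
    simp only []
    rw [← exp_sub_split j x (s - 2*Real.pi), exp_shift j s]
    ring
  -- integrability of the pieces
  have hH1 : IntervalIntegrable (fun x => H (x - s)) MeasureTheory.volume s (2*Real.pi) := by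
    have := (hH.mono_set (by
      rw [Set.uIcc_of_le (by linarith : (0:ℝ) ≤ 2*Real.pi - s), Set.uIcc_of_le two_pi_pos.le]
      exact Set.Icc_subset_Icc le_rfl (by linarith)) :
      IntervalIntegrable H MeasureTheory.volume 0 (2*Real.pi - s)).comp_sub_right s
    simpa using this
  have hH2 : IntervalIntegrable (fun x => H (x - (s - 2*Real.pi))) MeasureTheory.volume 0 s := by
    have := (hH.mono_set (by
      rw [Set.uIcc_of_le (by linarith : (2*Real.pi - s) ≤ 2*Real.pi), Set.uIcc_of_le two_pi_pos.le]
      exact Set.Icc_subset_Icc (by linarith) le_rfl) :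
      IntervalIntegrable H MeasureTheory.volume (2*Real.pi - s) (2*Real.pi)).comp_sub_right (s - 2*Real.pi)
    have h1 : 2*Real.pi - s + (s - 2*Real.pi) = 0 := by ring
    have h2 : 2*Real.pi + (s - 2*Real.pi) = s := by ring
    rwa [h1, h2] at this
  have hF1 : IntervalIntegrable (fun x => transl s g x * Complex.exp (-(Complex.I * (j:ℂ) * (x:ℂ))))
      MeasureTheory.volume s (2*Real.pi) := by
    refine ((hH1.mul_const e).congr_ae ?_)
    exact (MeasureTheory.ae_restrict_iff' measurableSet_uIoc).mpr (hae1.mono fun x hx h => (hx h).symm)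
  have hF2 : IntervalIntegrable (fun x => transl s g x * Complex.exp (-(Complex.I * (j:ℂ) * (x:ℂ))))
      MeasureTheory.volume 0 s := by
    refine ((hH2.mul_const e).congr_ae ?_)
    exact (MeasureTheory.ae_restrict_iff' measurableSet_uIoc).mpr (hae2.mono fun x hx h => (hx h).symm)
  refine ⟨hF2.trans hF1, ?_⟩
  rw [← intervalIntegral.integral_add_adjacent_intervals hF2 hF1]
  rw [intervalIntegral.integral_congr_ae hae1, intervalIntegral.integral_congr_ae hae2]
  rw [intervalIntegral.integral_mul_const, intervalIntegral.integral_mul_const]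
  rw [intervalIntegral.integral_comp_sub_right H s, intervalIntegral.integral_comp_sub_right H (s - 2*Real.pi)]
  have h1 : s - s = 0 := by ring
  have h2 : (0:ℝ) - (s - 2*Real.pi) = 2*Real.pi - s := by ring
  have h3 : s - (s - 2*Real.pi) = 2*Real.pi := by ring
  rw [h1, h2, h3]
  have hHa : IntervalIntegrable H MeasureTheory.volume 0 (2*Real.pi - s) := hH.mono_set (by
      rw [Set.uIcc_of_le (by linarith : (0:ℝ) ≤ 2*Real.pi - s), Set.uIcc_of_le two_pi_pos.le]
      exact Set.Icc_subset_Icc le_rfl (by linarith))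
  have hHb : IntervalIntegrable H MeasureTheory.volume (2*Real.pi - s) (2*Real.pi) := hH.mono_set (by
      rw [Set.uIcc_of_le (by linarith : (2*Real.pi - s) ≤ 2*Real.pi), Set.uIcc_of_le two_pi_pos.le]
      exact Set.Icc_subset_Icc (by linarith) le_rfl)
  rw [← intervalIntegral.integral_add_adjacent_intervals hHa hHb]
  ring

/-- Lemma 2.3, Fourier coefficients of the revival operator: for co-prime
positive `p, q`, `ℓ ∈ ℕ`, `f ∈ L²(0,2π)` and `j ∈ ℤ`,
`⟨ℛ_ℓ(p,q)f, e_j⟩ = e^{-ij^ℓ 2πp/q} f̂(j)`. -/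
theorem statement3 (p q : ℕ) (hp : 0 < p) (hq : 0 < q) (hpq : Nat.Coprime p q) (l : ℕ)
    (f : ℝ → ℂ) (hf : MeasureTheory.MemLp f 2 μ2) (j : ℤ) :
    (∫ x in Set.Ioc (0 : ℝ) (2 * Real.pi), Rop l p q f x * (starRingEnd ℂ) (eM j x)) =
      Complex.exp (-(Complex.I * (j : ℂ) ^ l * ((2 * Real.pi * p / q : ℝ) : ℂ))) * fc f j := by
  classical
  have hcne : ((Real.sqrt (2*Real.pi) : ℝ):ℂ) ≠ 0 := sqrt2pi_ne_zero
  have hqC : (q:ℂ) ≠ 0 := Nat.cast_ne_zero.mpr hq.ne'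
  -- integrability of f * E
  have hfin : MeasureTheory.IsFiniteMeasure μ2 := by
    constructor
    rw [μ2, MeasureTheory.Measure.restrict_apply_univ]
    exact measure_Ioc_lt_top
  have hfi : MeasureTheory.Integrable f μ2 := hf.integrable one_le_two
  have hEc : Continuous fun x : ℝ => Complex.exp (-(Complex.I * (j:ℂ) * (x:ℂ))) := by
    fun_prop
  have hHint : MeasureTheory.Integrable
      (fun x => f x * Complex.exp (-(Complex.I * (j:ℂ) * (x:ℂ)))) μ2 := by
    have hb := hfi.bdd_mul hEc.aestronglyMeasurable (MeasureTheory.ae_of_all _ fun x => le_of_eq (norm_E j x))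
    exact hb.congr (MeasureTheory.ae_of_all _ fun x => mul_comm _ _)
  have hH : IntervalIntegrable (fun y => f y * Complex.exp (-(Complex.I * (j:ℂ) * (y:ℂ))))
      MeasureTheory.volume 0 (2*Real.pi) :=
    (intervalIntegrable_iff_integrableOn_Ioc_of_le two_pi_pos.le).mpr hHint
  have hs0 : ∀ k : ℕ, (0:ℝ) ≤ 2*Real.pi*k/q := fun k => by positivity
  have hslt : ∀ k ∈ Finset.range q, 2*Real.pi*k/q < 2*Real.pi := by
    intro k hk
    rw [div_lt_iff₀ (by exact_mod_cast hq : (0:ℝ) < q)]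
    have h1 : (k:ℝ) < q := by exact_mod_cast Finset.mem_range.mp hk
    nlinarith [Real.pi_pos]
  -- pointwise rewriting of the integrand
  have hcongr : ∀ x : ℝ, Rop l p q f x * (starRingEnd ℂ) (eM j x)
      = ∑ k ∈ Finset.range q, (G l p q k / (q:ℂ)) *
          (transl (2*Real.pi*k/q) f x * Complex.exp (-(Complex.I * (j:ℂ) * (x:ℂ)))) := by
    intro x
    rw [Rop, conj_eM, Finset.mul_sum, Finset.sum_mul]
    refine Finset.sum_congr rfl fun k _ => ?_
    generalize hcc : ((Real.sqrt (2*Real.pi) : ℝ):ℂ) = cc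
    have hcne' : cc ≠ 0 := hcc ▸ hcne
    field_simp
  have h1 : (∫ x in Set.Ioc (0:ℝ) (2*Real.pi), Rop l p q f x * (starRingEnd ℂ) (eM j x))
      = ∫ x in Set.Ioc (0:ℝ) (2*Real.pi), ∑ k ∈ Finset.range q, (G l p q k / (q:ℂ)) *
          (transl (2*Real.pi*k/q) f x * Complex.exp (-(Complex.I * (j:ℂ) * (x:ℂ)))) :=
    MeasureTheory.integral_congr_ae (Filter.Eventually.of_forall hcongr)
  have hTk : ∀ k ∈ Finset.range q, MeasureTheory.IntegrableOn
      (fun x => transl (2*Real.pi*k/q) f x * Complex.exp (-(Complex.I * (j:ℂ) * (x:ℂ))))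
      (Set.Ioc (0:ℝ) (2*Real.pi)) MeasureTheory.volume := fun k hk =>
    (intervalIntegrable_iff_integrableOn_Ioc_of_le two_pi_pos.le).mp
      (transl_key f j hH (hs0 k) (hslt k hk)).1
  have h2 : (∫ x in Set.Ioc (0:ℝ) (2*Real.pi), ∑ k ∈ Finset.range q, (G l p q k / (q:ℂ)) *
          (transl (2*Real.pi*k/q) f x * Complex.exp (-(Complex.I * (j:ℂ) * (x:ℂ)))))
      = ∑ k ∈ Finset.range q, ∫ x in Set.Ioc (0:ℝ) (2*Real.pi), (G l p q k / (q:ℂ)) *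
          (transl (2*Real.pi*k/q) f x * Complex.exp (-(Complex.I * (j:ℂ) * (x:ℂ)))) :=
    MeasureTheory.integral_finset_sum _ (fun k hk => ((hTk k hk).const_mul _))
  have hIoc : ∀ k ∈ Finset.range q,
      (∫ x in Set.Ioc (0:ℝ) (2*Real.pi),
        transl (2*Real.pi*k/q) f x * Complex.exp (-(Complex.I * (j:ℂ) * (x:ℂ))))
      = Complex.exp (-(Complex.I * (j:ℂ) * ((2*Real.pi*k/q : ℝ):ℂ))) *
          (((Real.sqrt (2*Real.pi) : ℝ):ℂ) * fc f j) := by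
    intro k hk
    have hkey := (transl_key f j hH (hs0 k) (hslt k hk)).2
    rw [← intervalIntegral.integral_of_le two_pi_pos.le, hkey]
    congr 1
    rw [intervalIntegral.integral_of_le two_pi_pos.le, fc]
    rw [MeasureTheory.integral_div, mul_comm (((Real.sqrt (2*Real.pi) : ℝ):ℂ)) _,
      div_mul_cancel₀ _ sqrt2pi_ne_zero]
  rw [h1, h2]
  have h3 : ∀ k ∈ Finset.range q,
      (∫ x in Set.Ioc (0:ℝ) (2*Real.pi), (G l p q k / (q:ℂ)) *
          (transl (2*Real.pi*k/q) f x * Complex.exp (-(Complex.I * (j:ℂ) * (x:ℂ)))))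
      = (G l p q k * Complex.exp (-(Complex.I * (j:ℂ) * ((2*Real.pi*k/q : ℝ):ℂ)))) *
          ((((Real.sqrt (2*Real.pi) : ℝ):ℂ) * fc f j) / (q:ℂ)) := by
    intro k hk
    rw [MeasureTheory.integral_const_mul, hIoc k hk]
    ring
  rw [Finset.sum_congr rfl h3, ← Finset.sum_mul, alg l p q hq j]
  generalize ((Real.sqrt (2*Real.pi) : ℝ):ℂ) = cc at hcne ⊢
  field_simp
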